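/- Let a, b, c, d be positive integers with d dividing a+b+c and gcd(a,b,c,d) = 1. Then the number of points of the lattice L = ℤ³ + ℤ·(a/d, b/d, c/d) lying in the closed triangle {(x,y,z) ∈ ℝ³ : x + y + z = 1, x ≥ 0, y ≥ 0, z ≥ 0} equals (d + 2 + gcd(a,d) + gcd(b,d) + gcd(c,d))/2. -/

import Mathlib

open Finset



lemma dvd_mul_iff_aux (a d : ℕ) (ha : 0 < a) (hd : 0 < d) (k : ℕ) :
    d ∣ k * a ↔ (d / Nat.gcd a d) ∣ k := by
  set g := Nat.gcd a d with hg
  have hg0 : 0 < g := Nat.gcd_pos_of_pos_left _ ha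
  have hgd : g ∣ d := Nat.gcd_dvd_right a d
  have hga : g ∣ a := Nat.gcd_dvd_left a d
  set m := d / g with hm
  have hmd : m * g = d := Nat.div_mul_cancel hgd
  constructor
  · intro h
    have hcop : Nat.Coprime m (a / g) := by
      have := Nat.coprime_div_gcd_div_gcd (m := a) (n := d) hg0
      simpa [hm, Nat.gcd_comm] using this.symm
    have h2 : m * g ∣ k * (a / g) * g := by
      rw [hmd, mul_assoc, Nat.div_mul_cancel hga]; exact h
    have h3 : m ∣ k * (a / g) := (mul_dvd_mul_iff_right (by omega : g ≠ 0)).mp h2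
    exact hcop.dvd_of_dvd_mul_right h3
  · rintro ⟨j, rfl⟩
    have : m * j * a = (m * g) * (j * (a / g)) := by
      rw [mul_assoc m g, ← mul_assoc g j, mul_comm g j, mul_assoc j g,
        Nat.mul_div_cancel' hga, mul_assoc]
    rw [this, hmd]
    exact Dvd.intro _ rfl

lemma countA (a d : ℕ) (ha : 0 < a) (hd : 0 < d) :
    ((Finset.Ico 1 d).filter (fun k => d ∣ k * a)).card = Nat.gcd a d - 1 := by
  set g := Nat.gcd a d with hg
  have hg0 : 0 < g := Nat.gcd_pos_of_pos_left _ ha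
  have hgd : g ∣ d := Nat.gcd_dvd_right a d
  set m := d / g with hm
  have hm0 : 0 < m := Nat.div_pos (Nat.le_of_dvd hd hgd) hg0
  have hmd : m * g = d := Nat.div_mul_cancel hgd
  have : ((Finset.Ico 1 d).filter (fun k => d ∣ k * a)).card
      = ((Finset.Ioc 0 (d-1)).filter (fun k => m ∣ k)).card := by
    congr 1
    ext k
    simp only [mem_filter, mem_Ico, mem_Ioc]
    rw [dvd_mul_iff_aux a d ha hd, ← hg, ← hm]
    omega
  rw [this, Nat.Ioc_filter_dvd_card_eq_div]
  -- (d-1)/m = g - 1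
  have : d - 1 = m * (g - 1) + (m - 1) := by
    have h2 : m * (g - 1) = m * g - m := by
      rw [Nat.mul_sub]; ring_nf
    have h3 : m ≤ d := Nat.le_of_dvd hd (Nat.div_dvd_of_dvd hgd)
    rw [h2, hmd]
    omega
  rw [this, Nat.mul_add_div hm0, Nat.div_eq_of_lt (by omega)]
  omega

lemma eq_of_dvd_bound (d s : ℕ) (hd : 0 < d) (h : d ∣ s) (h2 : s < 3 * d) :
    s = 0 ∨ s = d ∨ s = 2 * d := by
  obtain ⟨t, rfl⟩ := h
  have ht : t < 3 := by
    by_contra hh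
    push_neg at hh
    have : 3 * d ≤ d * t := by calc 3 * d = d * 3 := by ring
                                  _ ≤ d * t := Nat.mul_le_mul_left d hh
    omega
  interval_cases t <;> omega

lemma mod_sub_aux (x d k : ℕ) (hd : 0 < d) (hx : 0 < x) (hk : k < d) (h : ¬ d ∣ k * x) :
    ((d - k) * x) % d = d - (k * x) % d := by
  set r := k * x % d with hr
  set q := k * x / d with hq
  have hqr : d * q + r = k * x := Nat.div_add_mod (k * x) d
  have hrd : r < d := Nat.mod_lt _ hd
  have hr0 : r ≠ 0 := fun hh => h (Nat.dvd_of_mod_eq_zero hh)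
  have hqx : q + 1 ≤ x := by
    have h1 : k * x < d * x := Nat.mul_lt_mul_of_lt_of_le hk (le_refl x) hx
    have h2 : d * q < d * x := by omega
    have := Nat.lt_of_mul_lt_mul_left h2
    omega
  have e1 : (d - k) * x = d * (x - q - 1) + (d - r) := by
    have e2 : (d - k) * x = d * x - k * x := by
      rw [Nat.sub_mul]
    have e3 : d * (x - q - 1) = d * x - d * q - d := by
      rw [Nat.mul_sub, Nat.mul_sub, Nat.mul_one]
    have e4 : d * (q + 1) ≤ d * x := Nat.mul_le_mul_left d hqx
    rw [Nat.mul_add, Nat.mul_one] at e4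
    omega
  rw [e1, Nat.mul_add_mod, Nat.mod_eq_of_lt (by omega)]

lemma dvd_of_dvd_all (a b c d m : ℕ)
    (hgcd : Nat.gcd (Nat.gcd (Nat.gcd a b) c) d = 1)
    (h1 : d ∣ m * a) (h2 : d ∣ m * b) (h3 : d ∣ m * c) : d ∣ m := by
  have h4 : d ∣ m * d := Dvd.dvd.mul_left dvd_rfl m
  have : d ∣ Nat.gcd (Nat.gcd (Nat.gcd (m*a) (m*b)) (m*c)) (m*d) :=
    Nat.dvd_gcd (Nat.dvd_gcd (Nat.dvd_gcd h1 h2) h3) h4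
  rwa [Nat.gcd_mul_left, Nat.gcd_mul_left, Nat.gcd_mul_left, hgcd, mul_one] at this

lemma card_K (a b c d : ℕ) (ha : 0 < a) (hb : 0 < b) (hc : 0 < c) (hd : 0 < d)
    (hdvd : d ∣ a + b + c)
    (hgcd : Nat.gcd (Nat.gcd (Nat.gcd a b) c) d = 1) :
    2 * (3 + ((Finset.Ico 1 d).filter
        (fun k => k * a % d + k * b % d + k * c % d = d)).card)
      = d + 2 + Nat.gcd a d + Nat.gcd b d + Nat.gcd c d := by
  classical
  set K := (Finset.Ico 1 d).filter
        (fun k => k * a % d + k * b % d + k * c % d = d) with hK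
  set A := (Finset.Ico 1 d).filter (fun k => d ∣ k * a) with hA
  set B := (Finset.Ico 1 d).filter (fun k => d ∣ k * b) with hB
  set C := (Finset.Ico 1 d).filter (fun k => d ∣ k * c) with hC
  set K1 := (Finset.Ico 1 d).filter (fun k =>
      k * a % d + k * b % d + k * c % d = d ∧
      ¬ d ∣ k * a ∧ ¬ d ∣ k * b ∧ ¬ d ∣ k * c) with hK1
  set K2 := (Finset.Ico 1 d).filter (fun k =>
      k * a % d + k * b % d + k * c % d = 2 * d) with hK2
  have hAcard : A.card = Nat.gcd a d - 1 := countA a d ha hd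
  have hBcard : B.card = Nat.gcd b d - 1 := countA b d hb hd
  have hCcard : C.card = Nat.gcd c d - 1 := countA c d hc hd
  have hga : 1 ≤ Nat.gcd a d := Nat.gcd_pos_of_pos_left _ ha
  have hgb : 1 ≤ Nat.gcd b d := Nat.gcd_pos_of_pos_left _ hb
  have hgc : 1 ≤ Nat.gcd c d := Nat.gcd_pos_of_pos_left _ hc
  have hmodlt : ∀ (x k : ℕ), k * x % d < d := fun x k => Nat.mod_lt _ hd
  -- sum of the three remainders is divisible by d
  have hsumdvd : ∀ k : ℕ, d ∣ (k * a % d + k * b % d + k * c % d) := by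
    intro k
    have h0 : d ∣ k * a + k * b + k * c := by
      have := hdvd.mul_left k; rwa [mul_add, mul_add] at this
    have e1 := Nat.div_add_mod (k * a) d
    have e2 := Nat.div_add_mod (k * b) d
    have e3 := Nat.div_add_mod (k * c) d
    have e : k * a % d + k * b % d + k * c % d
        = (k * a + k * b + k * c) - d * (k * a / d + k * b / d + k * c / d) := by
      rw [Nat.mul_add, Nat.mul_add]; omega
    rw [e]
    exact Nat.dvd_sub h0 (Dvd.intro _ rfl)
  have hsums : ∀ k : ℕ, k * a % d + k * b % d + k * c % d = 0 ∨
      k * a % d + k * b % d + k * c % d = d ∨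
      k * a % d + k * b % d + k * c % d = 2 * d := by
    intro k
    refine eq_of_dvd_bound d _ hd (hsumdvd k) ?_
    have := hmodlt a k; have := hmodlt b k; have := hmodlt c k
    omega
  -- at most one divisibility can hold
  have hone : ∀ k, 1 ≤ k → k < d →
      (d ∣ k * a → d ∣ k * b → False) ∧ (d ∣ k * a → d ∣ k * c → False) ∧
      (d ∣ k * b → d ∣ k * c → False) := by
    intro k h1 h2
    have hs : d ∣ k * a + k * b + k * c := by
      have := hdvd.mul_left k; rwa [mul_add, mul_add] at this
    have key : d ∣ k * a → d ∣ k * b → d ∣ k * c → False := fun u v w =>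
      absurd (Nat.le_of_dvd (by omega) (dvd_of_dvd_all a b c d k hgcd u v w)) (by omega)
    refine ⟨fun u v => ?_, fun u w => ?_, fun v w => ?_⟩
    · exact key u v ((Nat.dvd_add_right (Nat.dvd_add u v)).mp hs)
    · have hs2 : d ∣ k * a + k * c + k * b := by
        have e : k * a + k * b + k * c = k * a + k * c + k * b := by ring
        rwa [e] at hs
      exact key u ((Nat.dvd_add_right (Nat.dvd_add u w)).mp hs2) w
    · have hs2 : d ∣ k * b + k * c + k * a := by
        have e : k * a + k * b + k * c = k * b + k * c + k * a := by ring
        rwa [e] at hs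
      exact key ((Nat.dvd_add_right (Nat.dvd_add v w)).mp hs2) v w
  -- K = A ∪ B ∪ C ∪ K1, pairwise disjoint
  have hKeq : K = A ∪ B ∪ C ∪ K1 := by
    ext k
    simp only [hK, hA, hB, hC, hK1, mem_union, mem_filter, mem_Ico]
    constructor
    · rintro ⟨⟨h1, h2⟩, h3⟩
      by_cases u : d ∣ k * a
      · exact Or.inl (Or.inl (Or.inl ⟨⟨h1, h2⟩, u⟩))
      by_cases v : d ∣ k * b
      · exact Or.inl (Or.inl (Or.inr ⟨⟨h1, h2⟩, v⟩))
      by_cases w : d ∣ k * c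
      · exact Or.inl (Or.inr ⟨⟨h1, h2⟩, w⟩)
      · exact Or.inr ⟨⟨h1, h2⟩, h3, u, v, w⟩
    · have hla := hmodlt a k; have hlb := hmodlt b k; have hlc := hmodlt c k
      have hss := hsums k
      rintro (((⟨⟨h1, h2⟩, u⟩ | ⟨⟨h1, h2⟩, v⟩) | ⟨⟨h1, h2⟩, w⟩) | ⟨⟨h1, h2⟩, h3, _⟩)
      · refine ⟨⟨h1, h2⟩, ?_⟩
        have hb' : ¬ d ∣ k * b := fun v => (hone k h1 h2).1 u v
        have hc' : ¬ d ∣ k * c := fun w => (hone k h1 h2).2.1 u w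
        rw [Nat.dvd_iff_mod_eq_zero] at u hb' hc'
        omega
      · refine ⟨⟨h1, h2⟩, ?_⟩
        have ha' : ¬ d ∣ k * a := fun u => (hone k h1 h2).1 u v
        have hc' : ¬ d ∣ k * c := fun w => (hone k h1 h2).2.2 v w
        rw [Nat.dvd_iff_mod_eq_zero] at v ha' hc'
        omega
      · refine ⟨⟨h1, h2⟩, ?_⟩
        have ha' : ¬ d ∣ k * a := fun u => (hone k h1 h2).2.1 u w
        have hb' : ¬ d ∣ k * b := fun v => (hone k h1 h2).2.2 v w
        rw [Nat.dvd_iff_mod_eq_zero] at w ha' hb'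
        omega
      · exact ⟨⟨h1, h2⟩, h3⟩
  have hdisAB : Disjoint A B := by
    rw [Finset.disjoint_left]
    intro k hk hk'
    simp only [hA, hB, mem_filter, mem_Ico] at hk hk'
    exact (hone k hk.1.1 hk.1.2).1 hk.2 hk'.2
  have hdisAC : Disjoint A C := by
    rw [Finset.disjoint_left]
    intro k hk hk'
    simp only [hA, hC, mem_filter, mem_Ico] at hk hk'
    exact (hone k hk.1.1 hk.1.2).2.1 hk.2 hk'.2
  have hdisBC : Disjoint B C := by
    rw [Finset.disjoint_left]
    intro k hk hk'
    simp only [hB, hC, mem_filter, mem_Ico] at hk hk'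
    exact (hone k hk.1.1 hk.1.2).2.2 hk.2 hk'.2
  have hdisABC_K1 : Disjoint (A ∪ B ∪ C) K1 := by
    rw [Finset.disjoint_left]
    intro k hk hk'
    simp only [hA, hB, hC, hK1, mem_union, mem_filter] at hk hk'
    rcases hk with ((⟨_, u⟩ | ⟨_, v⟩) | ⟨_, w⟩)
    · exact hk'.2.2.1 u
    · exact hk'.2.2.2.1 v
    · exact hk'.2.2.2.2 w
  have hKcard : K.card = A.card + B.card + C.card + K1.card := by
    rw [hKeq, Finset.card_union_of_disjoint hdisABC_K1,
        Finset.card_union_of_disjoint (Finset.disjoint_union_left.mpr ⟨hdisAC, hdisBC⟩),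
        Finset.card_union_of_disjoint hdisAB]
  -- Ico 1 d = A ∪ B ∪ C ∪ K1 ∪ K2
  have hIco : Finset.Ico 1 d = A ∪ B ∪ C ∪ K1 ∪ K2 := by
    ext k
    simp only [hA, hB, hC, hK1, hK2, mem_union, mem_filter, mem_Ico]
    constructor
    · intro hk
      by_cases u : d ∣ k * a
      · exact Or.inl (Or.inl (Or.inl (Or.inl ⟨hk, u⟩)))
      by_cases v : d ∣ k * b
      · exact Or.inl (Or.inl (Or.inl (Or.inr ⟨hk, v⟩)))
      by_cases w : d ∣ k * c
      · exact Or.inl (Or.inl (Or.inr ⟨hk, w⟩))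
      · have hla := hmodlt a k; have hlb := hmodlt b k; have hlc := hmodlt c k
        have hss := hsums k
        have u' := u; have v' := v; have w' := w
        rw [Nat.dvd_iff_mod_eq_zero] at u' v' w'
        by_cases hs : k * a % d + k * b % d + k * c % d = d
        · exact Or.inl (Or.inr ⟨hk, hs, u, v, w⟩)
        · exact Or.inr ⟨hk, by omega⟩
    · rintro ((((⟨hk, _⟩ | ⟨hk, _⟩) | ⟨hk, _⟩) | ⟨hk, _⟩) | ⟨hk, _⟩) <;> exact hk
  have hdisABCK1_K2 : Disjoint (A ∪ B ∪ C ∪ K1) K2 := by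
    rw [Finset.disjoint_left]
    intro k hk hk'
    simp only [hA, hB, hC, hK1, hK2, mem_union, mem_filter, mem_Ico] at hk hk'
    have h2 := hk'.2
    have := hmodlt a k; have := hmodlt b k; have := hmodlt c k
    rcases hk with (((⟨_, u⟩ | ⟨_, v⟩) | ⟨_, w⟩) | ⟨_, hs, _⟩)
    · rw [Nat.dvd_iff_mod_eq_zero] at u; omega
    · rw [Nat.dvd_iff_mod_eq_zero] at v; omega
    · rw [Nat.dvd_iff_mod_eq_zero] at w; omega
    · omega
  have hIcoCard : d - 1 = A.card + B.card + C.card + K1.card + K2.card := by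
    have h5 : (Finset.Ico 1 d).card = d - 1 := by rw [Nat.card_Ico]
    rw [← h5, hIco, Finset.card_union_of_disjoint hdisABCK1_K2,
        Finset.card_union_of_disjoint hdisABC_K1,
        Finset.card_union_of_disjoint (Finset.disjoint_union_left.mpr ⟨hdisAC, hdisBC⟩),
        Finset.card_union_of_disjoint hdisAB]
  -- bijection K1 ≃ K2 via k ↦ d - k
  have hbij : K1.card = K2.card := by
    apply Finset.card_bij' (fun k _ => d - k) (fun k _ => d - k)
    · intro k hk
      simp only [hK1, mem_filter, mem_Ico] at hk
      obtain ⟨⟨h1, h2⟩, hs, u, v, w⟩ := hk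
      simp only [hK2, mem_filter, mem_Ico]
      have ea := mod_sub_aux a d k hd ha h2 u
      have eb := mod_sub_aux b d k hd hb h2 v
      have ec := mod_sub_aux c d k hd hc h2 w
      have hla := hmodlt a k; have hlb := hmodlt b k; have hlc := hmodlt c k
      rw [Nat.dvd_iff_mod_eq_zero] at u v w
      exact ⟨⟨by omega, by omega⟩, by omega⟩
    · intro k hk
      simp only [hK2, mem_filter, mem_Ico] at hk
      obtain ⟨⟨h1, h2⟩, hs⟩ := hk
      simp only [hK1, mem_filter, mem_Ico]
      have hla := hmodlt a k; have hlb := hmodlt b k; have hlc := hmodlt c k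
      have u : ¬ d ∣ k * a := by rw [Nat.dvd_iff_mod_eq_zero]; omega
      have v : ¬ d ∣ k * b := by rw [Nat.dvd_iff_mod_eq_zero]; omega
      have w : ¬ d ∣ k * c := by rw [Nat.dvd_iff_mod_eq_zero]; omega
      have ea := mod_sub_aux a d k hd ha h2 u
      have eb := mod_sub_aux b d k hd hb h2 v
      have ec := mod_sub_aux c d k hd hc h2 w
      have u' := u; have v' := v; have w' := w
      rw [Nat.dvd_iff_mod_eq_zero] at u' v' w'
      refine ⟨⟨by omega, by omega⟩, by omega, ?_, ?_, ?_⟩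
      · rw [Nat.dvd_iff_mod_eq_zero]; omega
      · rw [Nat.dvd_iff_mod_eq_zero]; omega
      · rw [Nat.dvd_iff_mod_eq_zero]; omega
    · intro k hk
      simp only [hK1, mem_filter, mem_Ico] at hk
      omega
    · intro k hk
      simp only [hK2, mem_filter, mem_Ico] at hk
      omega
  omega
set_option maxHeartbeats 1000000

theorem stmt_3 (a b c d : ℕ) (ha : 0 < a) (hb : 0 < b) (hc : 0 < c) (hd : 0 < d)
    (hdvd : d ∣ a + b + c)
    (hgcd : Nat.gcd (Nat.gcd (Nat.gcd a b) c) d = 1) :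
    2 * ({ p : Fin 3 → ℝ |
        (∃ z : Fin 3 → ℤ, ∃ k : ℤ,
          p 0 = z 0 + k * ((a : ℝ) / d) ∧
          p 1 = z 1 + k * ((b : ℝ) / d) ∧
          p 2 = z 2 + k * ((c : ℝ) / d)) ∧
        p 0 + p 1 + p 2 = 1 ∧ (∀ i, 0 ≤ p i) }.ncard)
      = d + 2 + Nat.gcd a d + Nat.gcd b d + Nat.gcd c d := by
  classical
  have hdR : (d : ℝ) ≠ 0 := Nat.cast_ne_zero.mpr (by omega)
  have hdR' : (0:ℝ) < d := by positivity
  set K : Finset ℕ := (Finset.Ico 1 d).filter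
      (fun k => k * a % d + k * b % d + k * c % d = d) with hKdef
  set F : ℕ → (Fin 3 → ℝ) := fun k =>
      ![((k * a % d : ℕ) : ℝ) / d, ((k * b % d : ℕ) : ℝ) / d, ((k * c % d : ℕ) : ℝ) / d]
    with hFdef
  set V : Finset (Fin 3 → ℝ) := {![1,0,0], ![0,1,0], ![0,0,1]} with hVdef
  set T : Finset (Fin 3 → ℝ) := V ∪ K.image F with hTdef
  set S : Set (Fin 3 → ℝ) := { p : Fin 3 → ℝ |
        (∃ z : Fin 3 → ℤ, ∃ k : ℤ,
          p 0 = z 0 + k * ((a : ℝ) / d) ∧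
          p 1 = z 1 + k * ((b : ℝ) / d) ∧
          p 2 = z 2 + k * ((c : ℝ) / d)) ∧
        p 0 + p 1 + p 2 = 1 ∧ (∀ i, 0 ≤ p i) } with hSdef
  -- Step A : S = ↑T
  have hST : S = ↑T := by
    ext p
    simp only [hSdef, Set.mem_setOf_eq, Finset.coe_union, Set.mem_union, hTdef,
      Finset.coe_insert, Finset.coe_image, Set.mem_image, Finset.mem_coe, hVdef,
      Set.mem_insert_iff, Finset.mem_insert, Finset.mem_singleton,
      Finset.coe_singleton]
    constructor
    · rintro ⟨⟨z, k, h0, h1, h2⟩, hsum, hnn⟩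
      set m0 : ℤ := d * z 0 + k * a with hm0
      set m1 : ℤ := d * z 1 + k * b with hm1
      set m2 : ℤ := d * z 2 + k * c with hm2
      have hm0R : (m0 : ℝ) = d * p 0 := by
        rw [hm0, h0]; push_cast; field_simp
      have hm1R : (m1 : ℝ) = d * p 1 := by
        rw [hm1, h1]; push_cast; field_simp
      have hm2R : (m2 : ℝ) = d * p 2 := by
        rw [hm2, h2]; push_cast; field_simp
      have hp0 : p 0 ≤ 1 := by have := hnn 1; have := hnn 2; linarith
      have hp1 : p 1 ≤ 1 := by have := hnn 0; have := hnn 2; linarith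
      have hp2 : p 2 ≤ 1 := by have := hnn 0; have := hnn 1; linarith
      have hb0 : 0 ≤ m0 ∧ m0 ≤ d := by
        have e1 : (0:ℝ) ≤ (m0:ℝ) := by
          rw [hm0R]; exact mul_nonneg (le_of_lt hdR') (hnn 0)
        have e2 : (m0:ℝ) ≤ d := by
          rw [hm0R]
          calc (d:ℝ) * p 0 ≤ d * 1 := mul_le_mul_of_nonneg_left hp0 (le_of_lt hdR')
          _ = d := mul_one _
        exact ⟨by exact_mod_cast e1, by exact_mod_cast e2⟩
      have hb1 : 0 ≤ m1 ∧ m1 ≤ d := by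
        have e1 : (0:ℝ) ≤ (m1:ℝ) := by
          rw [hm1R]; exact mul_nonneg (le_of_lt hdR') (hnn 1)
        have e2 : (m1:ℝ) ≤ d := by
          rw [hm1R]
          calc (d:ℝ) * p 1 ≤ d * 1 := mul_le_mul_of_nonneg_left hp1 (le_of_lt hdR')
          _ = d := mul_one _
        exact ⟨by exact_mod_cast e1, by exact_mod_cast e2⟩
      have hb2 : 0 ≤ m2 ∧ m2 ≤ d := by
        have e1 : (0:ℝ) ≤ (m2:ℝ) := by
          rw [hm2R]; exact mul_nonneg (le_of_lt hdR') (hnn 2)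
        have e2 : (m2:ℝ) ≤ d := by
          rw [hm2R]
          calc (d:ℝ) * p 2 ≤ d * 1 := mul_le_mul_of_nonneg_left hp2 (le_of_lt hdR')
          _ = d := mul_one _
        exact ⟨by exact_mod_cast e1, by exact_mod_cast e2⟩
      have hmsum : m0 + m1 + m2 = d := by
        have e : ((m0 + m1 + m2 : ℤ) : ℝ) = d := by
          push_cast
          rw [hm0R, hm1R, hm2R]
          calc (d:ℝ) * p 0 + d * p 1 + d * p 2 = d * (p 0 + p 1 + p 2) := by ring
          _ = d := by rw [hsum, mul_one]
        exact_mod_cast e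
      have hpe0 : p 0 = (m0 : ℝ) / d := by rw [hm0R]; field_simp
      have hpe1 : p 1 = (m1 : ℝ) / d := by rw [hm1R]; field_simp
      have hpe2 : p 2 = (m2 : ℝ) / d := by rw [hm2R]; field_simp
      by_cases e0 : m0 = (d:ℤ)
      · left; left
        funext i
        fin_cases i <;> simp [hpe0, hpe1, hpe2, e0, (by omega : m1 = 0), (by omega : m2 = 0), hdR]
      by_cases e1 : m1 = (d:ℤ)
      · left; right; left
        funext i
        fin_cases i <;> simp [hpe0, hpe1, hpe2, e1, (by omega : m0 = 0), (by omega : m2 = 0), hdR]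
      by_cases e2 : m2 = (d:ℤ)
      · left; right; right
        funext i
        fin_cases i <;> simp [hpe0, hpe1, hpe2, e2, (by omega : m0 = 0), (by omega : m1 = 0), hdR]
      -- all m_i < d
      right
      set k' : ℕ := (k % d).toNat with hk'def
      have hk'1 : (k' : ℤ) = k % d := Int.toNat_of_nonneg (Int.emod_nonneg k (by exact_mod_cast (by omega : (d:ℤ) ≠ 0)))
      have hk'lt : k' < d := by
        have := Int.emod_lt_of_pos k (by exact_mod_cast hdR' : (0:ℤ) < d)
        omega
      have hkdvd : (d:ℤ) ∣ k - k' := by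
        have e := Int.mul_ediv_add_emod k d
        exact ⟨k / d, by linarith [hk'1]⟩
      -- show m_i equals the nat mod
      have hmod : ∀ (zz : ℤ) (x : ℕ) (mi : ℤ), mi = d * zz + k * x → 0 ≤ mi → mi < d →
          mi = ((k' * x % d : ℕ) : ℤ) := by
        intro zz x mi hmi hge hlt
        have hcong : (d:ℤ) ∣ mi - k' * x := by
          have : mi - k' * x = d * zz + (k - k') * x := by rw [hmi]; ring
          rw [this]
          exact dvd_add (Dvd.intro _ rfl) (Dvd.dvd.mul_right hkdvd x)
        have h1 : ((k':ℤ) * x) % d = mi % d := Int.modEq_iff_dvd.mpr hcong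
        have h2 : mi % d = mi := Int.emod_eq_of_lt hge hlt
        have h3 : ((k':ℤ) * x) % d = ((k' * x % d : ℕ) : ℤ) := by push_cast; ring_nf
        rw [← h2, ← h1, h3]
      have hm0' : m0 = ((k' * a % d : ℕ) : ℤ) := hmod (z 0) a m0 hm0 hb0.1 (by omega)
      have hm1' : m1 = ((k' * b % d : ℕ) : ℤ) := hmod (z 1) b m1 hm1 hb1.1 (by omega)
      have hm2' : m2 = ((k' * c % d : ℕ) : ℤ) := hmod (z 2) c m2 hm2 hb2.1 (by omega)
      have hsummod : k' * a % d + k' * b % d + k' * c % d = d := by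
        have e : ((k' * a % d + k' * b % d + k' * c % d : ℕ) : ℤ) = d := by
          rw [Nat.cast_add, Nat.cast_add, ← hm0', ← hm1', ← hm2']; exact hmsum
        exact_mod_cast e
      have hk'pos : 1 ≤ k' := by
        by_contra hh
        have : k' = 0 := by omega
        rw [this] at hm0' hm1' hm2'
        simp at hm0' hm1' hm2'
        omega
      refine ⟨k', ?_, ?_⟩
      · rw [hKdef]; simp only [Finset.mem_filter, Finset.mem_Ico]
        exact ⟨⟨hk'pos, hk'lt⟩, hsummod⟩
      · funext i
        fin_cases i
        · show F k' 0 = p 0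
          rw [hFdef]; simp only [Matrix.cons_val_zero]
          rw [hpe0, hm0']
          norm_cast
        · show F k' 1 = p 1
          rw [hFdef]; simp only [Matrix.cons_val_one, Matrix.head_cons]
          rw [hpe1, hm1']
          norm_cast
        · show F k' 2 = p 2
          rw [hFdef]
          simp only [Matrix.cons_val_two, Matrix.tail_cons, Matrix.head_cons]
          rw [hpe2, hm2']
          norm_cast
    · rintro ((rfl | rfl | rfl) | ⟨k, hk, rfl⟩)
      · exact ⟨⟨![1,0,0], 0, by norm_num, by norm_num, by norm_num [Matrix.cons_val_two, Matrix.tail_cons, Matrix.head_cons]⟩, by norm_num [Matrix.cons_val_two, Matrix.tail_cons, Matrix.head_cons],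
          fun i => by fin_cases i <;> norm_num⟩
      · exact ⟨⟨![0,1,0], 0, by norm_num, by norm_num, by norm_num [Matrix.cons_val_two, Matrix.tail_cons, Matrix.head_cons]⟩, by norm_num [Matrix.cons_val_two, Matrix.tail_cons, Matrix.head_cons],
          fun i => by fin_cases i <;> norm_num⟩
      · exact ⟨⟨![0,0,1], 0, by norm_num, by norm_num, by norm_num [Matrix.cons_val_two, Matrix.tail_cons, Matrix.head_cons]⟩, by norm_num [Matrix.cons_val_two, Matrix.tail_cons, Matrix.head_cons],
          fun i => by fin_cases i <;> norm_num⟩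
      · rw [hKdef] at hk
        simp only [Finset.mem_filter, Finset.mem_Ico] at hk
        obtain ⟨⟨hk1, hk2⟩, hks⟩ := hk
        have coord : ∀ x : ℕ, ((k * x % d : ℕ) : ℝ) / d
            = ((-(k * x / d : ℕ) : ℤ) : ℝ) + ((k : ℤ) : ℝ) * ((x:ℝ)/d) := by
          intro x
          have h := congrArg (fun n : ℕ => (n:ℝ)) (Nat.div_add_mod (k * x) d)
          simp only [Nat.cast_add, Nat.cast_mul] at h
          rw [div_eq_iff hdR, add_mul, mul_assoc, div_mul_cancel₀ _ hdR]
          simp only [Int.cast_neg, Int.cast_natCast]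
          linarith [h]
        refine ⟨⟨![(-(k * a / d : ℕ) : ℤ), (-(k * b / d : ℕ) : ℤ), (-(k * c / d : ℕ) : ℤ)],
            (k : ℤ), ?_, ?_, ?_⟩, ?_, ?_⟩
        · show F k 0 = _
          rw [hFdef]; simp only [Matrix.cons_val_zero]
          rw [coord a]
        · show F k 1 = _
          rw [hFdef]; simp only [Matrix.cons_val_one, Matrix.head_cons, Matrix.cons_val_zero]
          rw [coord b]
        · show F k 2 = _
          rw [hFdef]; simp only [Matrix.cons_val_two, Matrix.tail_cons, Matrix.head_cons]
          rw [coord c]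
        · show F k 0 + F k 1 + F k 2 = 1
          rw [hFdef]
          simp only [Matrix.cons_val_zero, Matrix.cons_val_one, Matrix.head_cons,
            Matrix.cons_val_two, Matrix.tail_cons]
          rw [← add_div, ← add_div, div_eq_one_iff_eq hdR]
          exact_mod_cast hks
        · intro i
          fin_cases i <;> · show (0:ℝ) ≤ _; rw [hFdef]; simp; positivity
  -- Step B/C : cardinality of T
  have n01 : (![1,0,0] : Fin 3 → ℝ) ≠ ![0,1,0] := by
    intro h; have := congrFun h 0; norm_num at this
  have n02 : (![1,0,0] : Fin 3 → ℝ) ≠ ![0,0,1] := by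
    intro h; have := congrFun h 0; norm_num at this
  have n12 : (![0,1,0] : Fin 3 → ℝ) ≠ ![0,0,1] := by
    intro h; have := congrFun h 1; norm_num at this
  have hVcard : V.card = 3 := by
    rw [hVdef]
    rw [Finset.card_insert_of_notMem (by simp [n01, n02]),
      Finset.card_insert_of_notMem (by simp [n12]), Finset.card_singleton]
  have hFlt : ∀ (kk : ℕ) (i : Fin 3), F kk i < 1 := by
    intro kk i
    have key : ∀ x : ℕ, ((kk * x % d : ℕ) : ℝ) / d < 1 := by
      intro x
      rw [div_lt_one hdR']
      exact_mod_cast Nat.mod_lt (kk * x) hd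
    fin_cases i
    · show F kk 0 < 1; rw [hFdef]; exact key a
    · show F kk 1 < 1; rw [hFdef]; exact key b
    · show F kk 2 < 1; rw [hFdef]; exact key c
  have hdis : Disjoint V (K.image F) := by
    rw [Finset.disjoint_left]
    intro q hq hq'
    rw [Finset.mem_image] at hq'
    obtain ⟨kk, _, rfl⟩ := hq'
    rw [hVdef] at hq
    simp only [Finset.mem_insert, Finset.mem_singleton] at hq
    rcases hq with h | h | h
    · have e := congrFun h 0
      have l := hFlt kk 0
      rw [e] at l
      norm_num at l
    · have e := congrFun h 1
      have l := hFlt kk 1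
      rw [e] at l
      norm_num at l
    · have e := congrFun h 2
      have l := hFlt kk 2
      rw [e] at l
      norm_num [Matrix.cons_val_two, Matrix.tail_cons, Matrix.head_cons] at l
  have hinj : Set.InjOn F ↑K := by
    intro k1 hk1 k2 hk2 he
    rw [Finset.mem_coe, hKdef, Finset.mem_filter, Finset.mem_Ico] at hk1 hk2
    have hx : ∀ (u v : ℕ), ((u:ℝ))/d = ((v:ℝ))/d → u = v := by
      intro u v huv
      have h2 : (u:ℝ) = v := by
        field_simp at huv; exact_mod_cast huv
      exact_mod_cast h2
    have ea : k1 * a % d = k2 * a % d := by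
      have e0 := congrFun he 0
      rw [hFdef] at e0
      simp only [Matrix.cons_val_zero] at e0
      exact hx _ _ e0
    have eb : k1 * b % d = k2 * b % d := by
      have e0 := congrFun he 1
      rw [hFdef] at e0
      simp only [Matrix.cons_val_one, Matrix.head_cons] at e0
      exact hx _ _ e0
    have ec : k1 * c % d = k2 * c % d := by
      have e0 := congrFun he 2
      rw [hFdef] at e0
      simp only [Matrix.cons_val_two, Matrix.tail_cons, Matrix.head_cons] at e0
      exact hx _ _ e0
    have aux : ∀ u v : ℕ, v < d → u ≤ v → u * a % d = v * a % d →
        u * b % d = v * b % d → u * c % d = v * c % d → u = v := by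
      intro u v hvd huv e1 e2 e3
      have da : d ∣ (v - u) * a := by
        rw [Nat.sub_mul]
        exact (Nat.modEq_iff_dvd' (Nat.mul_le_mul_right a huv)).mp e1
      have db : d ∣ (v - u) * b := by
        rw [Nat.sub_mul]
        exact (Nat.modEq_iff_dvd' (Nat.mul_le_mul_right b huv)).mp e2
      have dc : d ∣ (v - u) * c := by
        rw [Nat.sub_mul]
        exact (Nat.modEq_iff_dvd' (Nat.mul_le_mul_right c huv)).mp e3
      have hdd := dvd_of_dvd_all a b c d (v - u) hgcd da db dc
      rcases Nat.eq_zero_or_pos (v - u) with h | h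
      · omega
      · exact absurd (Nat.le_of_dvd h hdd) (by omega)
    rcases Nat.le_total k1 k2 with h | h
    · exact aux k1 k2 hk2.1.2 h ea eb ec
    · exact (aux k2 k1 hk1.1.2 h ea.symm eb.symm ec.symm).symm
  have hTcard : T.card = 3 + K.card := by
    rw [hTdef, Finset.card_union_of_disjoint hdis, hVcard,
      Finset.card_image_of_injOn hinj]
  rw [hST, Set.ncard_coe_finset, hTcard]
  exact card_K a b c d ha hb hc hd hdvd hgcd
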